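/- In the group L = ⟨x₁,x₂,x₃ | 2x₁=2x₂=n x₃ = c⟩ with n ≥ 2, the interval {x ∈ L : 0 ≤ x ≤ c} has exactly n + 3 elements, namely 0, x₁, x₂, x₃, 2x₃, …, (n−1)x₃, and c. -/

import Mathlib

/-- The subgroup of relations `2x₁ = 2x₂` and `2x₁ = n·x₃` inside ℤ³. -/
def rel (n : ℕ) : AddSubgroup (ℤ × ℤ × ℤ) :=
  AddSubgroup.closure {(2, -2, 0), (2, 0, -(n : ℤ))}

/-- The rank one abelian group `L = ⟨x₁,x₂,x₃ | 2x₁ = 2x₂ = n·x₃⟩`. -/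
abbrev L (n : ℕ) := (ℤ × ℤ × ℤ) ⧸ rel n

/-- The generator x₁ of L. -/
def x1 (n : ℕ) : L n := QuotientAddGroup.mk' (rel n) (1, 0, 0)

/-- The generator x₂ of L. -/
def x2 (n : ℕ) : L n := QuotientAddGroup.mk' (rel n) (0, 1, 0)

/-- The generator x₃ of L. -/
def x3 (n : ℕ) : L n := QuotientAddGroup.mk' (rel n) (0, 0, 1)

/-- The canonical element c = 2x₁ (= 2x₂ = n·x₃). -/
def cc (n : ℕ) : L n := (2 : ℤ) • x1 n

/-- The dualizing element ω = c - x₁ - x₂ - x₃. -/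
def om (n : ℕ) : L n := cc n - x1 n - x2 n - x3 n

/-- `x ≥ 0` in L: the coefficient of `c` in the (unique) normal form
`x = l₁x₁ + l₂x₂ + l₃x₃ + l·c` (with 0 ≤ l₁,l₂ ≤ 1, 0 ≤ l₃ ≤ n-1) is nonnegative. -/
def Nonneg (n : ℕ) (x : L n) : Prop :=
  ∃ l1 l2 l3 l : ℤ, 0 ≤ l1 ∧ l1 ≤ 1 ∧ 0 ≤ l2 ∧ l2 ≤ 1 ∧ 0 ≤ l3 ∧ l3 ≤ (n : ℤ) - 1 ∧
    0 ≤ l ∧ x = l1 • x1 n + l2 • x2 n + l3 • x3 n + l • cc n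

/-- The order on L: `x ≤ y` iff `y - x ≥ 0`. -/
def leL (n : ℕ) (x y : L n) : Prop := Nonneg n (y - x)

lemma mem_rel_iff (n : ℕ) (v : ℤ × ℤ × ℤ) :
    v ∈ rel n ↔ ∃ a b : ℤ, v = (2*a + 2*b, -2*a, -(n:ℤ)*b) := by
  rw [rel, AddSubgroup.mem_closure_pair]
  constructor
  · rintro ⟨a, b, rfl⟩
    exact ⟨a, b, by simp [Prod.ext_iff]; ring_nf; simp⟩
  · rintro ⟨a, b, rfl⟩
    exact ⟨a, b, by simp [Prod.ext_iff]; ring_nf; simp⟩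

lemma mk_eq_of (n : ℕ) (p q : ℤ × ℤ × ℤ) (a b : ℤ)
    (h : q = p + (2*a + 2*b, -2*a, -(n:ℤ)*b)) :
    QuotientAddGroup.mk' (rel n) p = QuotientAddGroup.mk' (rel n) q :=
  (QuotientAddGroup.mk'_eq_mk' _).mpr ⟨_, (mem_rel_iff n _).mpr ⟨a, b, rfl⟩, h.symm⟩

lemma combo_eq (n : ℕ) (l1 l2 l3 l : ℤ) :
    l1 • x1 n + l2 • x2 n + l3 • x3 n + l • cc n
      = QuotientAddGroup.mk' (rel n) (l1 + 2*l, l2, l3) := by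
  simp only [x1, x2, x3, cc, smul_smul, ← map_zsmul, ← map_add]
  congr 1
  simp [Prod.ext_iff]
  ring

lemma cc_mk (n : ℕ) : cc n = QuotientAddGroup.mk' (rel n) (2, 0, 0) := by
  simp only [cc, x1, ← map_zsmul]
  congr 1

lemma smul_x3 (n : ℕ) (k : ℤ) : k • x3 n = QuotientAddGroup.mk' (rel n) (0, 0, k) := by
  simp only [x3, ← map_zsmul]
  congr 1
  simp

def fw (n : ℕ) : (ℤ × ℤ × ℤ) →+ ℤ × ZMod 2 × ZMod 2 where
  toFun p := ((n:ℤ) * (p.1 + p.2.1) + 2 * p.2.2, (p.1 : ZMod 2), (p.2.1 : ZMod 2))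
  map_zero' := by simp
  map_add' p q := by
    simp [Prod.ext_iff]
    ring

def phi (n : ℕ) : L n →+ ℤ × ZMod 2 × ZMod 2 :=
  QuotientAddGroup.lift (rel n) (fw n) (by
    intro v hv
    rw [mem_rel_iff] at hv
    obtain ⟨a, b, rfl⟩ := hv
    refine Prod.ext ?_ (Prod.ext ?_ ?_)
    · show (n:ℤ) * (2*a + 2*b + -2*a) + 2 * (-(n:ℤ)*b) = 0; ring
    · show ((2*a + 2*b : ℤ) : ZMod 2) = 0
      rw [ZMod.intCast_zmod_eq_zero_iff_dvd]; exact ⟨a + b, by ring⟩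
    · show ((-2*a : ℤ) : ZMod 2) = 0
      rw [ZMod.intCast_zmod_eq_zero_iff_dvd]; exact ⟨-a, by ring⟩)

lemma phi_mk (n : ℕ) (p : ℤ × ℤ × ℤ) :
    phi n (QuotientAddGroup.mk' (rel n) p)
      = ((n:ℤ) * (p.1 + p.2.1) + 2 * p.2.2, (p.1 : ZMod 2), (p.2.1 : ZMod 2)) := rfl


/-- the interval `{x ∈ L : 0 ≤ x ≤ c}` consists exactly of
`0, x₁, x₂, x₃, 2x₃, …, (n-1)x₃, c` and has exactly `n + 3` elements. -/
theorem interval_card (n : ℕ) (hn : 2 ≤ n) :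
    {x : L n | leL n 0 x ∧ leL n x (cc n)} =
      ({0, x1 n, x2 n, cc n} ∪ (fun k : ℤ => k • x3 n) '' Set.Icc 1 ((n : ℤ) - 1)) ∧
    {x : L n | leL n 0 x ∧ leL n x (cc n)}.ncard = n + 3 := by
  have hnn : (2:ℤ) ≤ (n:ℤ) := by exact_mod_cast hn
  have hset : {x : L n | leL n 0 x ∧ leL n x (cc n)} =
      ({0, x1 n, x2 n, cc n} ∪ (fun k : ℤ => k • x3 n) '' Set.Icc 1 ((n : ℤ) - 1)) := by
    ext x
    simp only [Set.mem_setOf_eq, Set.mem_union, Set.mem_insert_iff,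
      Set.mem_singleton_iff, Set.mem_image, Set.mem_Icc, leL]
    constructor
    · rintro ⟨⟨l1, l2, l3, l, h11, h12, h21, h22, h31, h32, hl, hx⟩,
             ⟨m1, m2, m3, m, g11, g12, g21, g22, g31, g32, hm, hy⟩⟩
      rw [sub_zero] at hx
      rw [combo_eq] at hx hy
      have h2 : cc n =
          QuotientAddGroup.mk' (rel n) ((l1 + 2*l, l2, l3) + (m1 + 2*m, m2, m3)) := by
        rw [map_add, ← hx, ← hy]; abel
      rw [cc_mk, QuotientAddGroup.mk'_eq_mk'] at h2
      obtain ⟨z, hz, hzeq⟩ := h2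
      rw [mem_rel_iff n] at hz
      obtain ⟨a, b, rfl⟩ := hz
      simp only [Prod.mk_add_mk, Prod.mk.injEq] at hzeq
      obtain ⟨e1, e2, e3⟩ := hzeq
      have hb : b = 0 ∨ b = -1 := by
        rcases le_or_gt b 0 with h | h
        · rcases lt_or_ge b (-1) with h' | h'
          · exfalso
            have : 2 * (n:ℤ) ≤ -(n:ℤ) * b := by nlinarith
            omega
          · omega
        · exfalso
          have : -(n:ℤ) * b ≤ -(n:ℤ) := by nlinarith
          omega
      have hcase : (l1 = 0 ∧ l2 = 0 ∧ l3 = 0 ∧ l = 0) ∨ (l1 = 1 ∧ l2 = 0 ∧ l3 = 0 ∧ l = 0)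
          ∨ (l1 = 0 ∧ l2 = 1 ∧ l3 = 0 ∧ l = 0) ∨ (l1 = 0 ∧ l2 = 0 ∧ l3 = 0 ∧ l = 1)
          ∨ (l1 = 0 ∧ l2 = 0 ∧ (1 ≤ l3 ∧ l3 ≤ (n:ℤ) - 1) ∧ l = 0) := by
        rcases hb with rfl | rfl
        · simp only [mul_zero, neg_zero] at e3; omega
        · simp only [mul_neg_one, neg_neg] at e3; omega
      rcases hcase with ⟨rfl, rfl, rfl, rfl⟩ | ⟨rfl, rfl, rfl, rfl⟩ | ⟨rfl, rfl, rfl, rfl⟩ |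
        ⟨rfl, rfl, rfl, rfl⟩ | ⟨rfl, rfl, hl3, rfl⟩
      · norm_num at hx
        exact Or.inl (Or.inl (by rw [hx]; rfl))
      · norm_num at hx
        exact Or.inl (Or.inr (Or.inl hx))
      · norm_num at hx
        exact Or.inl (Or.inr (Or.inr (Or.inl hx)))
      · norm_num at hx
        refine Or.inl (Or.inr (Or.inr (Or.inr ?_)))
        rw [hx, cc_mk]; rfl
      · norm_num at hx
        refine Or.inr ⟨l3, hl3, ?_⟩
        show l3 • x3 n = x
        rw [smul_x3, hx]; rfl
    · intro h
      have h01 : (0:ℤ) ≤ 1 := by omega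
      have hn1 : (0:ℤ) ≤ (n:ℤ) - 1 := by omega
      rcases h with (rfl | rfl | rfl | rfl) | ⟨k, ⟨hk1, hk2⟩, rfl⟩
      · refine ⟨⟨0, 0, 0, 0, le_refl 0, h01, le_refl 0, h01, le_refl 0, hn1, le_refl 0, ?_⟩,
               ⟨0, 0, 0, 1, le_refl 0, h01, le_refl 0, h01, le_refl 0, hn1, h01, ?_⟩⟩
        · rw [sub_zero, combo_eq]
          exact (QuotientAddGroup.mk_zero _).symm
        · rw [sub_zero, combo_eq, cc_mk]
          rfl
      · refine ⟨⟨1, 0, 0, 0, h01, le_refl 1, le_refl 0, h01, le_refl 0, hn1, le_refl 0, ?_⟩,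
               ⟨1, 0, 0, 0, h01, le_refl 1, le_refl 0, h01, le_refl 0, hn1, le_refl 0, ?_⟩⟩
        · rw [sub_zero, combo_eq, x1]
          rfl
        · rw [combo_eq, cc_mk, x1, ← map_sub]
          apply mk_eq_of n _ _ 0 0
          simp [Prod.ext_iff]
      · refine ⟨⟨0, 1, 0, 0, le_refl 0, h01, h01, le_refl 1, le_refl 0, hn1, le_refl 0, ?_⟩,
               ⟨0, 1, 0, 0, le_refl 0, h01, h01, le_refl 1, le_refl 0, hn1, le_refl 0, ?_⟩⟩
        · rw [sub_zero, combo_eq, x2]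
          rfl
        · rw [combo_eq, cc_mk, x2, ← map_sub]
          apply mk_eq_of n _ _ (-1) 0
          simp [Prod.ext_iff]
      · refine ⟨⟨0, 0, 0, 1, le_refl 0, h01, le_refl 0, h01, le_refl 0, hn1, h01, ?_⟩,
               ⟨0, 0, 0, 0, le_refl 0, h01, le_refl 0, h01, le_refl 0, hn1, le_refl 0, ?_⟩⟩
        · rw [sub_zero, combo_eq, cc_mk]
          rfl
        · rw [combo_eq, sub_self]
          exact (QuotientAddGroup.mk_zero _).symm
      · refine ⟨⟨0, 0, k, 0, le_refl 0, h01, le_refl 0, h01, by omega, by omega, le_refl 0, ?_⟩,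
               ⟨0, 0, (n:ℤ) - k, 0, le_refl 0, h01, le_refl 0, h01, by omega, by omega, le_refl 0, ?_⟩⟩
        · show (fun k : ℤ => k • x3 n) k - 0 = _
          rw [sub_zero, combo_eq]
          show k • x3 n = _
          rw [smul_x3]
          rfl
        · show cc n - (fun k : ℤ => k • x3 n) k = _
          rw [combo_eq, cc_mk]
          show cc n - k • x3 n = _
          rw [cc_mk, smul_x3, ← map_sub]
          apply mk_eq_of n _ _ 0 (-1)
          simp [Prod.ext_iff] <;> ring
  refine ⟨hset, ?_⟩
  rw [hset]
  have hne1 : ∀ u v : L n, (phi n u).1 ≠ (phi n v).1 → u ≠ v :=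
    fun u v h e => h (by rw [e])
  have hne2 : ∀ u v : L n, (phi n u).2.1 ≠ (phi n v).2.1 → u ≠ v :=
    fun u v h e => h (by rw [e])
  have hne3 : ∀ u v : L n, (phi n u).2.2 ≠ (phi n v).2.2 → u ≠ v :=
    fun u v h e => h (by rw [e])
  have p0 : phi n (0 : L n) = (0, 0, 0) := map_zero _
  have p1 : phi n (x1 n) = ((n:ℤ), (1 : ZMod 2), (0 : ZMod 2)) := by
    rw [x1, phi_mk]; norm_num
  have p2 : phi n (x2 n) = ((n:ℤ), (0 : ZMod 2), (1 : ZMod 2)) := by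
    rw [x2, phi_mk]; norm_num
  have pc : phi n (cc n) = (2 * (n:ℤ), (0 : ZMod 2), (0 : ZMod 2)) := by
    rw [cc_mk, phi_mk]
    refine Prod.ext (by push_cast; ring) (Prod.ext ?_ ?_) <;> simp <;> decide
  have p3 : ∀ k : ℤ, phi n (k • x3 n) = (2 * k, (0 : ZMod 2), (0 : ZMod 2)) := by
    intro k; rw [smul_x3, phi_mk]; norm_num
  have hinj : Set.InjOn (fun k : ℤ => k • x3 n) (Set.Icc 1 ((n:ℤ) - 1)) := by
    intro i _ j _ hij
    have h2 := congrArg (phi n) hij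
    simp only [p3, Prod.mk.injEq] at h2
    omega
  have hB : ((fun k : ℤ => k • x3 n) '' Set.Icc 1 ((n:ℤ) - 1)).ncard = n - 1 := by
    rw [Set.ncard_image_of_injOn hinj, ← Finset.coe_Icc, Set.ncard_coe_finset, Int.card_Icc]
    omega
  have d01 : (0 : L n) ≠ x1 n := hne1 _ _ (by rw [p0, p1]; show (0:ℤ) ≠ (n:ℤ); omega)
  have d02 : (0 : L n) ≠ x2 n := hne1 _ _ (by rw [p0, p2]; show (0:ℤ) ≠ (n:ℤ); omega)
  have d0c : (0 : L n) ≠ cc n := hne1 _ _ (by rw [p0, pc]; show (0:ℤ) ≠ 2 * (n:ℤ); omega)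
  have d12 : x1 n ≠ x2 n := hne2 _ _ (by rw [p1, p2]; show (1 : ZMod 2) ≠ 0; decide)
  have d1c : x1 n ≠ cc n := hne2 _ _ (by rw [p1, pc]; show (1 : ZMod 2) ≠ 0; decide)
  have d2c : x2 n ≠ cc n := hne3 _ _ (by rw [p2, pc]; show (1 : ZMod 2) ≠ 0; decide)
  have hA : ({0, x1 n, x2 n, cc n} : Set (L n)).ncard = 4 := by
    rw [Set.ncard_insert_of_notMem (by simp [d01, d02, d0c]),
        Set.ncard_insert_of_notMem (by simp [d12, d1c]),
        Set.ncard_insert_of_notMem (by simp [d2c]), Set.ncard_singleton]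
  have hdis : Disjoint ({0, x1 n, x2 n, cc n} : Set (L n))
      ((fun k : ℤ => k • x3 n) '' Set.Icc 1 ((n:ℤ) - 1)) := by
    rw [Set.disjoint_right]
    rintro a ⟨k, ⟨hk1, hk2⟩, rfl⟩
    simp only [Set.mem_insert_iff, Set.mem_singleton_iff, not_or]
    refine ⟨?_, ?_, ?_, ?_⟩
    · exact (hne1 _ _ (by rw [p0, p3]; show (0:ℤ) ≠ 2 * k; omega)).symm
    · exact hne2 _ _ (by rw [p3, p1]; show (0 : ZMod 2) ≠ 1; decide)
    · exact hne3 _ _ (by rw [p3, p2]; show (0 : ZMod 2) ≠ 1; decide)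
    · exact hne1 _ _ (by rw [p3, pc]; show 2 * k ≠ 2 * (n:ℤ); omega)
  rw [Set.ncard_union_eq hdis (Set.toFinite _) (Set.Finite.image _ (Set.finite_Icc _ _)), hA, hB]
  omega
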